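/- Let n ≥ 2 and 1 ≤ s ≤ n/2 be integers and K a field. Suppose δ' : M_n(K) → M_n(K) satisfies δ'(xy) = δ'(x)y + xδ'(y) for all x, y with rank ≤ s and min(rank x, rank y) ≤ 1, and δ'(e_{ij}) = 0 for all standard matrix units e_{ij}. Then for each a ∈ K and all i, j there is a scalar μ(a) independent of i, j such that δ'(a·e_{ij}) = μ(a)e_{ij}, and μ : K → K satisfies μ(ab) = aμ(b) + μ(a)b and μ(a+b) = μ(a) + μ(b) for all a, b ∈ K; that is, μ is a derivation of the field K. -/

import Mathlib

open Matrix

theorem rankE_aux {n : ℕ} {K : Type*} [Field K] (i j : Fin n) (a : K) :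
    (single i j a).rank ≤ 1 := by
  classical
  unfold Matrix.rank
  refine finrank_le_one ⟨(Pi.single i a : Fin n → K), (Pi.single j 1 : Fin n → K), ?_⟩ ?_
  · show (single i j a).mulVec (Pi.single j 1) = (Pi.single i a : Fin n → K)
    rw [single_mulVec]
    ext k
    by_cases hk : k = i <;> simp [hk, Pi.single, Function.update]
  · rintro ⟨w, x, rfl⟩
    refine ⟨x j, Subtype.ext ?_⟩
    show x j • (Pi.single i a : Fin n → K) = (single i j a).mulVec x
    rw [single_mulVec]
    ext k
    by_cases hk : k = i <;> simp [hk, Pi.single, Function.update, mul_comm]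

theorem stmt_11 {n s : ℕ} (K : Type*) [Field K]
    (hn : 2 ≤ n) (hs1 : 1 ≤ s) (hs2 : 2 * s ≤ n)
    (δ' : Matrix (Fin n) (Fin n) K → Matrix (Fin n) (Fin n) K)
    (hδ : ∀ x y : Matrix (Fin n) (Fin n) K,
      x.rank ≤ s → y.rank ≤ s → min x.rank y.rank ≤ 1 →
      δ' (x * y) = δ' x * y + x * δ' y)
    (hunits : ∀ i j : Fin n, δ' (single i j (1 : K)) = 0) :
    ∃ μ : K → K,
      (∀ (a : K) (i j : Fin n),
        δ' (a • single i j (1 : K)) = μ a • single i j (1 : K)) ∧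
      (∀ a b : K, μ (a * b) = a * μ b + μ a * b) ∧
      (∀ a b : K, μ (a + b) = μ a + μ b) := by
  classical
  set i0 : Fin n := ⟨0, by omega⟩ with hi0
  set i1 : Fin n := ⟨1, by omega⟩ with hi1
  have hne : i0 ≠ i1 := by
    simp [hi0, hi1, Fin.ext_iff]
  -- convenient form of the Leibniz hypothesis for rank ≤ 1 matrices
  have hδ1 : ∀ x y : Matrix (Fin n) (Fin n) K, x.rank ≤ 1 → y.rank ≤ 1 →
      δ' (x * y) = δ' x * y + x * δ' y := by
    intro x y hx hy
    exact hδ x y (hx.trans hs1) (hy.trans hs1) (le_trans (min_le_left _ _) hx)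
  -- δ' kills zero
  have hzero : δ' 0 = 0 := by
    have h := hδ1 (single i0 i0 (1 : K)) (single i1 i1 (1 : K))
      (rankE_aux _ _ _) (rankE_aux _ _ _)
    rw [Matrix.single_mul_single_of_ne (h := hne), hunits, hunits] at h
    simpa using h
  -- δ' of a scaled matrix unit is concentrated at the same entry
  have hkey : ∀ (i j : Fin n) (a : K),
      δ' (single i j a) =
        (δ' (single i j a)) i j • single i j (1 : K) := by
    intro i j a
    set D := δ' (single i j a) with hD
    have h1 : D = single i i (1 : K) * D := by
      have h := hδ1 (single i i (1 : K)) (single i j a)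
        (rankE_aux _ _ _) (rankE_aux _ _ _)
      rw [single_mul_single_same, one_mul, hunits] at h
      simpa [← hD] using h
    have h2 : D = D * single j j (1 : K) := by
      have h := hδ1 (single i j a) (single j j (1 : K))
        (rankE_aux _ _ _) (rankE_aux _ _ _)
      rw [single_mul_single_same, mul_one, hunits] at h
      simpa [← hD] using h
    have h3 : D = single i i (1 : K) * D * single j j (1 : K) := by
      calc D = D * single j j (1 : K) := h2
        _ = single i i (1 : K) * D * single j j (1 : K) := by rw [← h1]
    ext k l
    conv_lhs => rw [h3]
    rcases eq_or_ne k i with rfl | hk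
    · rcases eq_or_ne l j with rfl | hl
      · simp
      · simp [hl, hl.symm]
    · simp [Matrix.mul_apply, hk, hk.symm]
  -- the scalar is independent of the column
  have hcol : ∀ (i j k : Fin n) (a : K),
      (δ' (single i j a)) i j = (δ' (single i k a)) i k := by
    intro i j k a
    have h := hδ1 (single i k a) (single k j (1 : K))
      (rankE_aux _ _ _) (rankE_aux _ _ _)
    rw [single_mul_single_same, mul_one, hunits, mul_zero, add_zero] at h
    rw [hkey i k a] at h
    have := congrArg (fun M => M i j) h
    simpa using this
  -- the scalar is independent of the row
  have hrow : ∀ (i j k : Fin n) (a : K),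
      (δ' (single i j a)) i j = (δ' (single k j a)) k j := by
    intro i j k a
    have h := hδ1 (single i k (1 : K)) (single k j a)
      (rankE_aux _ _ _) (rankE_aux _ _ _)
    rw [single_mul_single_same, one_mul, hunits, zero_mul, zero_add] at h
    rw [hkey k j a] at h
    have := congrArg (fun M => M i j) h
    simpa using this
  set μ : K → K := fun a => (δ' (single i0 i0 a)) i0 i0 with hμdef
  have hμ : ∀ (a : K) (i j : Fin n),
      δ' (single i j a) = μ a • single i j (1 : K) := by
    intro a i j
    rw [hkey i j a]
    congr 1
    rw [hcol i j i0 a, hrow i i0 i0 a]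
  refine ⟨μ, ?_, ?_, ?_⟩
  · intro a i j
    rw [smul_single, smul_eq_mul, mul_one]
    exact hμ a i j
  · -- product rule
    intro a b
    have h := hδ1 (single i0 i0 a) (single i0 i0 b)
      (rankE_aux _ _ _) (rankE_aux _ _ _)
    rw [single_mul_single_same, hμ (a * b), hμ a, hμ b, smul_mul_assoc, mul_smul_comm,
      single_mul_single_same, single_mul_single_same, one_mul, mul_one] at h
    have h' := congrArg (fun M => M i0 i0) h
    simp only [Matrix.add_apply, Matrix.smul_apply, single_apply_same, smul_eq_mul,
      mul_one] at h'
    rw [h']; ring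
  · -- additivity
    intro a b
    set u : Matrix (Fin n) (Fin n) K :=
      single i0 i0 (1 : K) + single i0 i1 a with hu
    set v : Matrix (Fin n) (Fin n) K :=
      single i0 i1 b + single i1 i1 (1 : K) with hv
    have hufac : single i0 i0 (1 : K) * u = u := by
      rw [hu, mul_add, single_mul_single_same, single_mul_single_same, one_mul, one_mul]
    have hvfac : v * single i1 i1 (1 : K) = v := by
      rw [hv, add_mul, single_mul_single_same, single_mul_single_same, mul_one, mul_one]
    have hru : u.rank ≤ 1 := by
      calc u.rank = (single i0 i0 (1 : K) * u).rank := by rw [hufac]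
        _ ≤ (single i0 i0 (1 : K)).rank := rank_mul_le_left _ _
        _ ≤ 1 := rankE_aux _ _ _
    have hrv : v.rank ≤ 1 := by
      calc v.rank = (v * single i1 i1 (1 : K)).rank := by rw [hvfac]
        _ ≤ (single i1 i1 (1 : K)).rank := rank_mul_le_right _ _
        _ ≤ 1 := rankE_aux _ _ _
    have huv : u * v = single i0 i1 (a + b) := by
      rw [hu, hv, add_mul, mul_add, mul_add, single_mul_single_same,
        Matrix.single_mul_single_of_ne (h := hne), Matrix.single_mul_single_of_ne (h := hne.symm),
        single_mul_single_same, one_mul, mul_one, add_zero, zero_add,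
        single_add, add_comm]
    -- δ' u * v = μ a • E i0 i1 1
    have hduv : δ' u * v = μ a • single i0 i1 (1 : K) := by
      have h1 : δ' u * single i1 i1 (1 : K) = μ a • single i0 i1 (1 : K) := by
        have hx : u * single i1 i1 (1 : K) = single i0 i1 a := by
          rw [hu, add_mul, Matrix.single_mul_single_of_ne (h := hne), single_mul_single_same,
            mul_one, zero_add]
        have h := hδ1 u (single i1 i1 (1 : K)) hru (rankE_aux _ _ _)
        rw [hx, hunits, mul_zero, add_zero, hμ a] at h
        exact h.symm
      have h2 : δ' u * single i0 i1 (1 : K) = 0 := by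
        have hx : u * single i0 i1 (1 : K) = single i0 i1 (1 : K) := by
          rw [hu, add_mul, single_mul_single_same, Matrix.single_mul_single_of_ne (h := hne.symm),
            one_mul, add_zero]
        have h := hδ1 u (single i0 i1 (1 : K)) hru (rankE_aux _ _ _)
        rw [hx, hunits, mul_zero, add_zero] at h
        exact h.symm
      have hb : single i0 i1 b = b • single i0 i1 (1 : K) := by
        rw [smul_single, smul_eq_mul, mul_one]
      rw [hv, mul_add, h1, hb, mul_smul_comm, h2, smul_zero, zero_add]
    -- u * δ' v = μ b • E i0 i1 1
    have hudv : u * δ' v = μ b • single i0 i1 (1 : K) := by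
      have h1 : single i0 i0 (1 : K) * δ' v = μ b • single i0 i1 (1 : K) := by
        have hx : single i0 i0 (1 : K) * v = single i0 i1 b := by
          rw [hv, mul_add, single_mul_single_same, Matrix.single_mul_single_of_ne (h := hne),
            one_mul, add_zero]
        have h := hδ1 (single i0 i0 (1 : K)) v (rankE_aux _ _ _) hrv
        rw [hx, hunits, zero_mul, zero_add, hμ b] at h
        exact h.symm
      have h2 : single i0 i1 (1 : K) * δ' v = 0 := by
        have hx : single i0 i1 (1 : K) * v = single i0 i1 (1 : K) := by
          rw [hv, mul_add, Matrix.single_mul_single_of_ne (h := hne.symm), single_mul_single_same,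
            mul_one, zero_add]
        have h := hδ1 (single i0 i1 (1 : K)) v (rankE_aux _ _ _) hrv
        rw [hx, hunits, zero_mul, zero_add] at h
        exact h.symm
      have ha : single i0 i1 a = a • single i0 i1 (1 : K) := by
        rw [smul_single, smul_eq_mul, mul_one]
      rw [hu, add_mul, h1, ha, smul_mul_assoc, h2, smul_zero, add_zero]
    have h := hδ1 u v hru hrv
    rw [huv, hμ (a + b), hduv, hudv] at h
    have h' := congrArg (fun M => M i0 i1) h
    simp only [Matrix.add_apply, Matrix.smul_apply, single_apply_same, smul_eq_mul,
      mul_one] at h'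
    exact h'
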